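/- arXiv:0801.0972 — 3 statements merged into one kernel-verified Lean document; each statement's English description precedes it below -/
import Mathlib

section
/- Let K ⊆ L be number fields, let p be a rational prime and m ≥ 1 an integer. Then Σ_{k=1}^m k·Φ_{p^k}(L) ≤ [L:K] · Σ_{k=1}^m k·Φ_{p^k}(K). -/
open NumberField

noncomputable section

/-- `Φ_q(K)`: the number of nonzero prime ideals of the ring of integers of `K`
of absolute norm `q`. -/
def PhiQ (K : Type*) [Field K] [NumberField K] (q : ℕ) : ℕ :=
  Nat.card {P : Ideal (𝓞 K) // P.IsPrime ∧ Ideal.absNorm P = q}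

namespace PhiAux

open Ideal

/-- The finite set of prime ideals of `𝓞 E` of absolute norm `q`, as a `Finset`. -/
def primesNorm (E : Type*) [Field E] [NumberField E] (q : ℕ) : Finset (Ideal (𝓞 E)) :=
  Set.Finite.toFinset
    ((Ideal.finite_setOf_absNorm_eq q).subset
      (fun _ h => h.2) : {P : Ideal (𝓞 E) | P.IsPrime ∧ Ideal.absNorm P = q}.Finite)

lemma mem_primesNorm {E : Type*} [Field E] [NumberField E] {q : ℕ} {P : Ideal (𝓞 E)} :
    P ∈ primesNorm E q ↔ P.IsPrime ∧ Ideal.absNorm P = q := by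
  simp [primesNorm]

lemma phiQ_eq_card (E : Type*) [Field E] [NumberField E] (q : ℕ) :
    PhiQ E q = (primesNorm E q).card := by
  have hfin : {P : Ideal (𝓞 E) | P.IsPrime ∧ Ideal.absNorm P = q}.Finite :=
    (Ideal.finite_setOf_absNorm_eq q).subset fun _ h => h.2
  rw [primesNorm, ← Set.ncard_eq_toFinset_card _ hfin, ← Nat.card_coe_set_eq]
  rfl

/-- The set of primes of norm `p^k` for some `1 ≤ k ≤ m`. -/
def T (E : Type*) [Field E] [NumberField E] [DecidableEq (Ideal (𝓞 E))] (p m : ℕ) :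
    Finset (Ideal (𝓞 E)) :=
  (Finset.Icc 1 m).biUnion (fun k => primesNorm E (p ^ k))

lemma mem_T {E : Type*} [Field E] [NumberField E] [DecidableEq (Ideal (𝓞 E))]
    {p m : ℕ} (hp : p.Prime)
    {P : Ideal (𝓞 E)} (h : P ∈ T E p m) :
    P.IsPrime ∧ P ≠ ⊥ ∧ ∃ k, 1 ≤ k ∧ k ≤ m ∧ Ideal.absNorm P = p ^ k := by
  obtain ⟨k, hk, hPk⟩ := Finset.mem_biUnion.mp h
  obtain ⟨hprime, hnorm⟩ := mem_primesNorm.mp hPk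
  obtain ⟨hk1, hkm⟩ := Finset.mem_Icc.mp hk
  refine ⟨hprime, ?_, k, hk1, hkm, hnorm⟩
  intro hbot
  rw [hbot, Ideal.absNorm_bot] at hnorm
  exact (pow_ne_zero k hp.ne_zero) hnorm.symm

lemma sum_eq (E : Type*) [Field E] [NumberField E] [DecidableEq (Ideal (𝓞 E))]
    {p : ℕ} (hp : p.Prime) (m : ℕ) :
    ∑ k ∈ Finset.Icc 1 m, k * PhiQ E (p ^ k) =
      ∑ Q ∈ T E p m, (Ideal.absNorm Q).factorization p := by
  classical
  rw [T, Finset.sum_biUnion]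
  · refine Finset.sum_congr rfl fun k _ => ?_
    rw [phiQ_eq_card, Finset.sum_congr rfl (fun Q hQ => ?_), Finset.sum_const, smul_eq_mul,
      mul_comm]
    rw [(mem_primesNorm.mp hQ).2, hp.factorization_pow, Finsupp.single_eq_same]
  · intro a ha b hb hab
    simp only [Finset.disjoint_left]
    intro Q hQa hQb
    have h1 := (mem_primesNorm.mp hQa).2
    have h2 := (mem_primesNorm.mp hQb).2
    exact hab (Nat.pow_right_injective hp.two_le (h1.symm.trans h2))


set_option synthInstance.maxHeartbeats 400000 in
lemma key_norm (K L : Type*) [Field K] [Field L] [NumberField K] [NumberField L]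
    [Algebra K L] (P : Ideal (𝓞 L)) (hPprime : P.IsPrime) (hP0 : P ≠ ⊥) :
    Ideal.absNorm P = Ideal.absNorm (P.comap (algebraMap (𝓞 K) (𝓞 L))) ^
        Ideal.inertiaDeg' (P.comap (algebraMap (𝓞 K) (𝓞 L))) P ∧
      (P.comap (algebraMap (𝓞 K) (𝓞 L))).IsPrime ∧
      P.comap (algebraMap (𝓞 K) (𝓞 L)) ≠ ⊥ ∧
      0 < Ideal.inertiaDeg' (P.comap (algebraMap (𝓞 K) (𝓞 L))) P := by
  haveI : Module.Finite (𝓞 K) (𝓞 L) := Module.Finite.of_restrictScalars_finite ℤ _ _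
  haveI := hPprime
  haveI : (P.comap (algebraMap (𝓞 K) (𝓞 L))).IsPrime := Ideal.comap_isPrime _ P
  have hQ0 : P.comap (algebraMap (𝓞 K) (𝓞 L)) ≠ ⊥ :=
    fun h => hP0 (Ideal.eq_bot_of_comap_eq_bot h)
  haveI hQm : (P.comap (algebraMap (𝓞 K) (𝓞 L))).IsMaximal :=
    Ideal.IsPrime.isMaximal inferInstance hQ0
  haveI : P.LiesOver (P.comap (algebraMap (𝓞 K) (𝓞 L))) := ⟨rfl⟩
  refine ⟨?_, inferInstance, hQ0, ?_⟩
  · rw [Ideal.inertiaDeg'_algebraMap]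
    letI := @Fintype.ofFinite _ (Ideal.finiteQuotientOfFreeOfNeBot P hP0)
    letI := @Fintype.ofFinite _ (Ideal.finiteQuotientOfFreeOfNeBot _ hQ0)
    letI : Field (𝓞 K ⧸ P.comap (algebraMap (𝓞 K) (𝓞 L))) := Ideal.Quotient.field _
    rw [Ideal.absNorm_apply, Ideal.absNorm_apply, Submodule.cardQuot_apply,
      Submodule.cardQuot_apply, Nat.card_eq_fintype_card, Nat.card_eq_fintype_card]
    exact Module.card_eq_pow_finrank
  · exact Ideal.inertiaDeg'_pos _ P

end PhiAux

open PhiAux Ideal in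
/-- Let `K ⊆ L` be number fields, `p` a rational prime and `m ≥ 1`.  Then
`Σ_{k=1}^m k·Φ_{p^k}(L) ≤ [L:K] · Σ_{k=1}^m k·Φ_{p^k}(K)`. -/
theorem sum_phi_prime_powers_le (K L : Type*) [Field K] [Field L]
    [NumberField K] [NumberField L] [Algebra K L]
    (p : ℕ) (hp : p.Prime) (m : ℕ) (hm : 1 ≤ m) :
    ∑ k ∈ Finset.Icc 1 m, k * PhiQ L (p ^ k) ≤
      Module.finrank K L * ∑ k ∈ Finset.Icc 1 m, k * PhiQ K (p ^ k) := by
  classical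
  haveI : Module.Finite (𝓞 K) (𝓞 L) := Module.Finite.of_restrictScalars_finite ℤ _ _
  set f : 𝓞 K →+* 𝓞 L := algebraMap (𝓞 K) (𝓞 L) with hf
  have hinj : Function.Injective f := by
    have h1 : Function.Injective (algebraMap (𝓞 K) L) := by
      rw [IsScalarTower.algebraMap_eq (𝓞 K) K L]
      exact (algebraMap K L).injective.comp (IsFractionRing.injective (𝓞 K) K)
    rw [IsScalarTower.algebraMap_eq (𝓞 K) (𝓞 L) L, RingHom.coe_comp] at h1
    exact Function.Injective.of_comp h1
  have key : ∀ (P : Ideal (𝓞 L)), P.IsPrime → P ≠ ⊥ →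
      Ideal.absNorm P = Ideal.absNorm (P.comap f) ^ Ideal.inertiaDeg' (P.comap f) P ∧
      (P.comap f).IsPrime ∧ P.comap f ≠ ⊥ ∧ 0 < Ideal.inertiaDeg' (P.comap f) P :=
    fun P hPprime hP0 => key_norm K L P hPprime hP0
  -- contraction maps `T L p m` into `T K p m`
  have hmaps : ∀ P ∈ T L p m, P.comap f ∈ T K p m := by
    intro P hP
    obtain ⟨hPprime, hP0, k, hk1, hkm, hnorm⟩ := mem_T hp hP
    obtain ⟨hpow, hQprime, hQ0, hfdeg⟩ := key P hPprime hP0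
    have hdvd : Ideal.absNorm (P.comap f) ∣ p ^ k := by
      rw [← hnorm, hpow]
      exact dvd_pow_self _ hfdeg.ne'
    obtain ⟨j, hjk, hQnorm⟩ := (Nat.dvd_prime_pow hp).mp hdvd
    have hj1 : 1 ≤ j := by
      rcases Nat.eq_zero_or_pos j with h | h
      · exfalso
        rw [h, pow_zero, Ideal.absNorm_eq_one_iff] at hQnorm
        exact hQprime.ne_top hQnorm
      · exact h
    exact Finset.mem_biUnion.mpr ⟨j, Finset.mem_Icc.mpr ⟨hj1, hjk.trans hkm⟩,
      mem_primesNorm.mpr ⟨hQprime, hQnorm⟩⟩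
  rw [sum_eq L hp m, sum_eq K hp m,
    ← Finset.sum_fiberwise_of_maps_to hmaps (fun P => (Ideal.absNorm P).factorization p),
    Finset.mul_sum]
  refine Finset.sum_le_sum fun Q hQ => ?_
  -- per-fiber bound
  obtain ⟨hQprime, hQ0, j, hj1, hjm, hQnorm⟩ := mem_T hp hQ
  haveI := hQprime
  haveI hQm : Q.IsMaximal := Ideal.IsPrime.isMaximal hQprime hQ0
  have hmap0 : Ideal.map f Q ≠ ⊥ := fun h =>
    hQ0 ((Ideal.map_eq_bot_iff_of_injective hinj).mp h)
  -- each prime in the fiber is a factor of `map f Q`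
  have hsub : (T L p m).filter (fun P => P.comap f = Q) ⊆
      (UniqueFactorizationMonoid.factors (Ideal.map f Q)).toFinset := by
    intro P hP
    obtain ⟨hPT, hPc⟩ := Finset.mem_filter.mp hP
    obtain ⟨hPprime, hP0, _⟩ := mem_T hp hPT
    rw [Multiset.mem_toFinset, UniqueFactorizationMonoid.factors_eq_normalizedFactors,
      Ideal.mem_normalizedFactors_iff hmap0]
    exact ⟨hPprime, Ideal.map_le_iff_le_comap.mpr (le_of_eq hPc.symm)⟩
  have hsum : (∑ P ∈ (UniqueFactorizationMonoid.factors (Ideal.map f Q)).toFinset,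
      Ideal.ramificationIdx' Q P * Ideal.inertiaDeg' Q P) = Module.finrank K L := by
    rw [hf]
    exact Ideal.sum_ramification_inertia (R := 𝓞 K) (S := 𝓞 L) (p := Q) K L hQ0
  have hle : (∑ P ∈ (T L p m).filter (fun P => P.comap f = Q),
      Ideal.inertiaDeg' Q P) ≤ Module.finrank K L := by
    rw [← hsum]
    refine le_trans (Finset.sum_le_sum fun P hP => ?_)
      (Finset.sum_le_sum_of_subset hsub)
    obtain ⟨hPT, hPc⟩ := Finset.mem_filter.mp hP
    obtain ⟨hPprime, hP0, _⟩ := mem_T hp hPT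
    have he : Ideal.ramificationIdx' Q P ≠ 0 :=
      Ideal.IsDedekindDomain.ramificationIdx'_ne_zero hmap0 hPprime
        (Ideal.map_le_iff_le_comap.mpr (le_of_eq hPc.symm))
    exact Nat.le_mul_of_pos_left _ (Nat.pos_of_ne_zero he)
  have hfib : ∀ P ∈ (T L p m).filter (fun P => P.comap f = Q),
      (Ideal.absNorm P).factorization p = j * Ideal.inertiaDeg' Q P := by
    intro P hP
    obtain ⟨hPT, hPc⟩ := Finset.mem_filter.mp hP
    obtain ⟨hPprime, hP0, _⟩ := mem_T hp hPT
    obtain ⟨hpow, _, _, _⟩ := key P hPprime hP0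
    rw [hpow, hPc, hQnorm, ← pow_mul, hp.factorization_pow, Finsupp.single_eq_same]
  calc (∑ P ∈ (T L p m).filter (fun P => P.comap f = Q),
        (Ideal.absNorm P).factorization p)
      = ∑ P ∈ (T L p m).filter (fun P => P.comap f = Q),
        j * Ideal.inertiaDeg' Q P := Finset.sum_congr rfl hfib
    _ = j * ∑ P ∈ (T L p m).filter (fun P => P.comap f = Q),
        Ideal.inertiaDeg' Q P := by rw [Finset.mul_sum]
    _ ≤ j * Module.finrank K L := Nat.mul_le_mul_left j hle
    _ = Module.finrank K L * (Ideal.absNorm Q).factorization p := by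
        rw [hQnorm, hp.factorization_pow, Finsupp.single_eq_same, mul_comm]

end
end

section
/- Let K ⊆ L be number fields and let α_1, α_2 be nonnegative real numbers with 2·α_1 ≥ α_2. Then α_1·Φ_ℝ(L) + α_2·Φ_ℂ(L) ≤ [L:K]·(α_1·Φ_ℝ(K) + α_2·Φ_ℂ(K)). -/
open NumberField NumberField.InfinitePlace Module
open scoped Classical

section aux

variable (K L : Type*) [Field K] [Field L] [NumberField K] [NumberField L] [Algebra K L]

lemma my_fiber_card (φ : K →+* ℂ) :
    Fintype.card {ψ : L →+* ℂ // ψ.comp (algebraMap K L) = φ} = finrank K L := by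
  letI : Algebra K ℂ := φ.toAlgebra
  have e : {ψ : L →+* ℂ // ψ.comp (algebraMap K L) = φ} ≃ (L →ₐ[K] ℂ) :=
    { toFun := fun ψ => ⟨ψ.1, fun x => RingHom.congr_fun ψ.2 x⟩
      invFun := fun f => ⟨f.toRingHom, RingHom.ext fun x => f.commutes x⟩
      left_inv := fun ψ => rfl
      right_inv := fun f => rfl }
  rw [Fintype.card_congr e, AlgHom.card]

lemma my_key : finrank K L * (2 * nrComplexPlaces K) ≤ 2 * nrComplexPlaces L := by
  rw [← card_complex_embeddings, ← card_complex_embeddings]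
  have h1 : Fintype.card {ψ : L →+* ℂ // ¬ ComplexEmbedding.IsReal (ψ.comp (algebraMap K L))} =
      finrank K L * Fintype.card {φ : K →+* ℂ // ¬ ComplexEmbedding.IsReal φ} := by
    rw [Fintype.card_subtype, Fintype.card_subtype,
      Finset.card_eq_sum_card_fiberwise
        (f := fun ψ : L →+* ℂ => ψ.comp (algebraMap K L))
        (t := Finset.univ.filter fun φ : K →+* ℂ => ¬ ComplexEmbedding.IsReal φ)
        (fun ψ hψ => by
          simp only [Finset.mem_coe, Finset.mem_filter, Finset.mem_univ, true_and] at hψ ⊢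
          exact hψ)]
    have hterm : ∀ φ ∈ Finset.univ.filter fun φ : K →+* ℂ => ¬ ComplexEmbedding.IsReal φ,
        ((Finset.univ.filter fun ψ : L →+* ℂ =>
          ¬ ComplexEmbedding.IsReal (ψ.comp (algebraMap K L))).filter
            fun ψ => ψ.comp (algebraMap K L) = φ).card = finrank K L := by
      intro φ hφ
      have hφ' : ¬ ComplexEmbedding.IsReal φ := by
        simpa using (Finset.mem_filter.mp hφ).2
      rw [Finset.filter_filter]
      have : ∀ ψ : L →+* ℂ,
          (¬ ComplexEmbedding.IsReal (ψ.comp (algebraMap K L)) ∧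
            ψ.comp (algebraMap K L) = φ) ↔ ψ.comp (algebraMap K L) = φ := by
        intro ψ
        constructor
        · exact And.right
        · intro hψ; exact ⟨hψ ▸ hφ', hψ⟩
      simp_rw [this]
      rw [← Fintype.card_subtype, my_fiber_card K L φ]
    rw [Finset.sum_congr rfl hterm, Finset.sum_const, smul_eq_mul, mul_comm]
  rw [← h1]
  apply Fintype.card_subtype_mono
  intro ψ hψ hψ'
  exact hψ (hψ'.comp _)

lemma my_key' : finrank K L * nrComplexPlaces K ≤ nrComplexPlaces L := by
  have h := my_key K L
  rw [← Nat.mul_assoc, Nat.mul_comm (finrank K L) 2, Nat.mul_assoc] at h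
  omega

end aux

noncomputable section

/-- `Φ_ℝ(K)`: the number of real places of `K`. -/
def PhiR (K : Type*) [Field K] [NumberField K] : ℕ :=
  Nat.card {w : InfinitePlace K // w.IsReal}

/-- `Φ_ℂ(K)`: the number of complex places of `K`. -/
def PhiC (K : Type*) [Field K] [NumberField K] : ℕ :=
  Nat.card {w : InfinitePlace K // w.IsComplex}

/-- Let `K ⊆ L` be number fields and `α₁, α₂` nonnegative reals with `2·α₁ ≥ α₂`.
Then `α₁·Φ_ℝ(L) + α₂·Φ_ℂ(L) ≤ [L:K]·(α₁·Φ_ℝ(K) + α₂·Φ_ℂ(K))`. -/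
theorem archimedean_places_bound (K L : Type*) [Field K] [Field L]
    [NumberField K] [NumberField L] [Algebra K L]
    (α₁ α₂ : ℝ) (h₁ : 0 ≤ α₁) (h₂ : 0 ≤ α₂) (h : α₂ ≤ 2 * α₁) :
    α₁ * PhiR L + α₂ * PhiC L ≤
      (Module.finrank K L : ℝ) * (α₁ * PhiR K + α₂ * PhiC K) := by
  have hPhiRK : PhiR K = nrRealPlaces K := Nat.card_eq_fintype_card
  have hPhiRL : PhiR L = nrRealPlaces L := Nat.card_eq_fintype_card
  have hPhiCK : PhiC K = nrComplexPlaces K := Nat.card_eq_fintype_card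
  have hPhiCL : PhiC L = nrComplexPlaces L := Nat.card_eq_fintype_card
  have hK := card_add_two_mul_card_eq_rank K
  have hL := card_add_two_mul_card_eq_rank L
  have htower : finrank ℚ K * finrank K L = finrank ℚ L := finrank_mul_finrank ℚ K L
  have hkey := my_key' K L
  rw [hPhiRK, hPhiRL, hPhiCK, hPhiCL]
  generalize hc : nrRealPlaces L = c at hL ⊢
  generalize hd : nrComplexPlaces L = d at hL hkey ⊢
  generalize ha : nrRealPlaces K = a at hK ⊢
  generalize hb : nrComplexPlaces K = b at hK hkey ⊢
  generalize hn : finrank K L = n at hkey htower ⊢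
  generalize hp : finrank ℚ K = p at hK htower
  generalize hq : finrank ℚ L = q at hL htower
  have e1 : (c : ℝ) + 2 * (d : ℝ) = (q : ℝ) := by exact_mod_cast hL
  have e2 : (a : ℝ) + 2 * (b : ℝ) = (p : ℝ) := by exact_mod_cast hK
  have e3 : (p : ℝ) * (n : ℝ) = (q : ℝ) := by exact_mod_cast htower
  have e4 : (n : ℝ) * (b : ℝ) ≤ (d : ℝ) := by exact_mod_cast hkey
  have e5 : ((a : ℝ) + 2 * b) * (n : ℝ) = (c : ℝ) + 2 * (d : ℝ) := by
    rw [e2, e3, ← e1]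
  have P : 0 ≤ (2 * α₁ - α₂) * ((d : ℝ) - (n : ℝ) * (b : ℝ)) :=
    mul_nonneg (by linarith) (by linarith)
  have e6 : α₁ * (((a : ℝ) + 2 * b) * (n : ℝ)) = α₁ * ((c : ℝ) + 2 * (d : ℝ)) := by rw [e5]
  nlinarith [P, e6]

end
end

section
/- Let G be a finite group and H a subgroup of G. Then the cardinality of the union ⋃_{τ∈G} τHτ⁻¹ of all conjugates of H satisfies |⋃_{τ∈G} τHτ⁻¹| ≤ 1 + |G| − [G:H]. -/
private lemma conj_image_eq {G : Type*} [Group G] (H : Subgroup G) {τ σ : G}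
    (h : τ⁻¹ * σ ∈ H) :
    (fun g => τ * g * τ⁻¹) '' (H : Set G) = (fun g => σ * g * σ⁻¹) '' (H : Set G) := by
  have key : ∀ τ σ : G, τ⁻¹ * σ ∈ H →
      (fun g => τ * g * τ⁻¹) '' (H : Set G) ⊆ (fun g => σ * g * σ⁻¹) '' (H : Set G) := by
    intro τ σ h x hx
    obtain ⟨g, hg, rfl⟩ := hx
    refine ⟨(σ⁻¹ * τ) * g * (σ⁻¹ * τ)⁻¹, ?_, by group⟩
    exact H.mul_mem (H.mul_mem (by simpa using H.inv_mem h) hg) (H.inv_mem (by simpa using H.inv_mem h))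
  exact subset_antisymm (key τ σ h) (key σ τ (by simpa using H.inv_mem h))

/-- For a finite group `G` and a subgroup `H ≤ G`, the union of all conjugates of `H`
has cardinality at most `1 + |G| − [G:H]`. -/
theorem card_union_conjugates_le (G : Type*) [Group G] [Finite G] (H : Subgroup G) :
    Set.ncard (⋃ τ : G, (fun g => τ * g * τ⁻¹) '' (H : Set G)) ≤
      1 + Nat.card G - H.index := by
  classical
  letI : Fintype G := Fintype.ofFinite G
  -- the union is contained in {1} ∪ union over coset representatives of (conj of H \ {1})
  set f : G ⧸ H → Set G := fun c => (fun g => c.out * g * c.out⁻¹) '' ((H : Set G) \ {1})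
    with hf
  have hsub : (⋃ τ : G, (fun g => τ * g * τ⁻¹) '' (H : Set G)) ⊆
      insert 1 (⋃ c : G ⧸ H, f c) := by
    intro x hx
    simp only [Set.mem_iUnion] at hx
    obtain ⟨τ, g, hg, rfl⟩ := hx
    by_cases hg1 : g = 1
    · simp [hg1]
    · right
      refine Set.mem_iUnion.2 ⟨QuotientGroup.mk τ, ?_⟩
      have hout : ((QuotientGroup.mk τ : G ⧸ H)).out⁻¹ * τ ∈ H := by
        have := QuotientGroup.mk_out_eq_mul H τ
        obtain ⟨h, hh⟩ := this
        rw [hh]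
        simpa using h.2
      set o := ((QuotientGroup.mk τ : G ⧸ H)).out with ho
      refine ⟨(o⁻¹ * τ) * g * (o⁻¹ * τ)⁻¹, ⟨?_, ?_⟩, by show o * ((o⁻¹ * τ) * g * (o⁻¹ * τ)⁻¹) * o⁻¹ = τ * g * τ⁻¹; group⟩
      · exact H.mul_mem (H.mul_mem hout hg) (H.inv_mem hout)
      · simp only [Set.mem_singleton_iff]
        intro hcontra
        apply hg1
        have : g = (o⁻¹ * τ)⁻¹ * ((o⁻¹ * τ) * g * (o⁻¹ * τ)⁻¹) * (o⁻¹ * τ) := by group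
        rw [this, hcontra]; group
  have hcard : ∀ c : G ⧸ H, (f c).ncard ≤ Nat.card H - 1 := by
    intro c
    rw [hf]
    rw [Set.ncard_image_of_injective _ (fun a b hab => by
      simpa using mul_left_cancel (mul_right_cancel hab))]
    rw [Set.ncard_diff_singleton_of_mem H.one_mem]
    rw [show (H : Set G).ncard = Nat.card H by rw [← Nat.card_coe_set_eq]; rfl]
  calc Set.ncard (⋃ τ : G, (fun g => τ * g * τ⁻¹) '' (H : Set G))
      ≤ Set.ncard (insert 1 (⋃ c : G ⧸ H, f c)) := Set.ncard_le_ncard hsub (Set.toFinite _)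
    _ ≤ 1 + Set.ncard (⋃ c : G ⧸ H, f c) := by simpa [Nat.add_comm] using Set.ncard_insert_le (1:G) (⋃ c : G ⧸ H, f c)
    _ ≤ 1 + H.index * (Nat.card H - 1) := by
        gcongr
        rw [Set.ncard_eq_toFinset_card']
        have : (⋃ c : G ⧸ H, f c).toFinset = Finset.univ.biUnion (fun c => (f c).toFinset) := by
          rw [Set.toFinset_iUnion]
        rw [this]
        calc (Finset.univ.biUnion fun c => (f c).toFinset).card
            ≤ ∑ c : G ⧸ H, ((f c).toFinset).card := Finset.card_biUnion_le
          _ ≤ ∑ _c : G ⧸ H, (Nat.card H - 1) := by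
              apply Finset.sum_le_sum
              intro c _
              rw [← Set.ncard_eq_toFinset_card']
              exact hcard c
          _ = H.index * (Nat.card H - 1) := by
              rw [Finset.sum_const, smul_eq_mul]
              congr 1
              rw [Subgroup.index, Nat.card_eq_fintype_card, Finset.card_univ]
    _ ≤ 1 + Nat.card G - H.index := by
        have h1 : H.index * Nat.card H = Nat.card G := H.index_mul_card
        have h2 : 1 ≤ Nat.card H := Nat.one_le_iff_ne_zero.2 (Nat.card_pos).ne'
        have h3 : H.index * (Nat.card H - 1) = H.index * Nat.card H - H.index := by
          rw [Nat.mul_sub, mul_one]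
        have h4 : H.index ≤ Nat.card G := by
          rw [← h1]; exact Nat.le_mul_of_pos_right _ (Nat.card_pos)
        omega
end
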